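/- Let X be a finite graph. There is a well-defined group homomorphism μ : A_X → (P_X)^× (the Magnus representation) determined by μ(s) = 1 + s for each vertex generator s, where P_X is the completed monoid ring of the right-angled Artin monoid M_X. -/

import Mathlib

/-- Defining relators of the right-angled Artin group of a graph. -/
def raagRels {V : Type*} (X : SimpleGraph V) : Set (FreeGroup V) :=
  {r | ∃ x y : V, X.Adj x y ∧
    r = FreeGroup.of x * FreeGroup.of y * (FreeGroup.of x)⁻¹ * (FreeGroup.of y)⁻¹}

/-- The right-angled Artin group of a graph. -/
def RAAG {V : Type*} (X : SimpleGraph V) : Type _ := PresentedGroup (raagRels X)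

instance {V : Type*} (X : SimpleGraph V) : Group (RAAG X) := by
  unfold RAAG; infer_instance

/-- The generator of the RAAG corresponding to a vertex. -/
def RAAG.of {V : Type*} (X : SimpleGraph V) (v : V) : RAAG X := PresentedGroup.of v
/-- The congruence on the free monoid defining the right-angled Artin monoid. -/
def raamCon {V : Type*} (X : SimpleGraph V) : Con (FreeMonoid V) :=
  conGen (fun a b => ∃ x y : V, X.Adj x y ∧
    a = FreeMonoid.of x * FreeMonoid.of y ∧ b = FreeMonoid.of y * FreeMonoid.of x)

/-- The right-angled Artin monoid of a graph. -/
def RAAM {V : Type*} (X : SimpleGraph V) : Type _ := (raamCon X).Quotient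

instance {V : Type*} (X : SimpleGraph V) : Monoid (RAAM X) := by
  unfold RAAM; infer_instance

/-- The generator of the RAAM corresponding to a vertex. -/
def RAAM.of {V : Type*} (X : SimpleGraph V) (v : V) : RAAM X :=
  (raamCon X).mk' (FreeMonoid.of v)

/-- The image in `RAAM X` of a word in the vertices. -/
def RAAM.mk {V : Type*} (X : SimpleGraph V) (l : List V) : RAAM X :=
  (raamCon X).mk' (FreeMonoid.ofList l)
noncomputable section

variable {V : Type*} (X : SimpleGraph V)

/-- The monoid ring of the RAAM. -/
abbrev RaamRing := MonoidAlgebra ℤ (RAAM X)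

/-- The image of a vertex generator in the monoid ring. -/
def vgen (v : V) : RaamRing X := MonoidAlgebra.of ℤ (RAAM X) (RAAM.of X v)

/-- The two-sided ideal of the monoid ring generated by the vertex generators,
as a `ℤ`-submodule. -/
def genIdeal : Submodule ℤ (RaamRing X) :=
  Submodule.span ℤ {x | ∃ (a b : RaamRing X) (v : V), x = a * vgen X v * b}

lemma genIdeal_mul_right (x : RaamRing X) (hx : x ∈ genIdeal X) (r : RaamRing X) :
    x * r ∈ genIdeal X := by
  induction hx using Submodule.span_induction generalizing r with
  | mem y hy =>
      obtain ⟨a, b, v, rfl⟩ := hy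
      exact Submodule.subset_span ⟨a, b * r, v, by rw [mul_assoc]⟩
  | zero => rw [zero_mul]; exact (genIdeal X).zero_mem
  | add y z _ _ hy hz => rw [add_mul]; exact (genIdeal X).add_mem (hy r) (hz r)
  | smul c y _ hy => rw [smul_mul_assoc]; exact (genIdeal X).smul_mem c (hy r)

lemma genIdeal_pow_le (k : ℕ) : genIdeal X ^ (k + 2) ≤ genIdeal X ^ (k + 1) := by
  induction k with
  | zero =>
      rw [pow_one, pow_succ, pow_one]
      exact Submodule.mul_le.2 fun x hx y _ => genIdeal_mul_right X x hx y
  | succ n ih =>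
      rw [pow_succ (n := n + 2), pow_succ (n := n + 1)]
      exact Submodule.mul_le.2 fun x hx y hy => Submodule.mul_mem_mul (ih hx) hy

/-- The quotient congruence by the `(k+1)`-st power of `genIdeal`. -/
def qcon (k : ℕ) : RingCon (RaamRing X) :=
  ringConGen (fun a b => a - b ∈ genIdeal X ^ (k + 1))

/-- The quotient ring `ℤ[M_X]/I^{k+1}`. -/
abbrev QRing (k : ℕ) := (qcon X k).Quotient

lemma qcon_le (k : ℕ) : qcon X (k + 1) ≤ qcon X k := by
  refine RingCon.ringConGen_le.2 fun a b h => ?_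
  exact RingConGen.Rel.of _ _ (genIdeal_pow_le X k h)

/-- The transition map `ℤ[M_X]/I^{k+2} → ℤ[M_X]/I^{k+1}`. -/
def qtrans (k : ℕ) : QRing X (k + 1) →+* QRing X k where
  toFun := Quotient.lift (fun r => (RingCon.mk' (qcon X k)) r)
    (fun a b h => (RingCon.eq _).2 (qcon_le X k h))
  map_one' := rfl
  map_mul' := fun a b => Quotient.inductionOn₂ a b fun _ _ => rfl
  map_zero' := rfl
  map_add' := fun a b => Quotient.inductionOn₂ a b fun _ _ => rfl

@[simp] lemma qtrans_mk (k : ℕ) (r : RaamRing X) :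
    qtrans X k (RingCon.mk' (qcon X (k + 1)) r) = RingCon.mk' (qcon X k) r := rfl

/-- The ring of partially commuting power series `P_X = lim← ℤ[M_X]/I^k`,
realized as the subring of compatible sequences in `Π k, ℤ[M_X]/I^{k+1}`. -/
def PSeries : Subring (Π k, QRing X k) where
  carrier := {f | ∀ k, qtrans X k (f (k + 1)) = f k}
  one_mem' := fun k => map_one _
  mul_mem' := fun {a b} ha hb k => by
    simp only [Pi.mul_apply, map_mul, ha k, hb k]
  zero_mem' := fun k => map_zero _
  add_mem' := fun {a b} ha hb k => by
    simp only [Pi.add_apply, map_add, ha k, hb k]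
  neg_mem' := fun {a} ha k => by
    simp only [Pi.neg_apply, map_neg, ha k]

/-- The canonical map `ℤ[M_X] → P_X`. -/
def toPSeries : RaamRing X →+* PSeries X where
  toFun r := ⟨fun k => RingCon.mk' (qcon X k) r, fun k => rfl⟩
  map_one' := by ext k; exact map_one _
  map_mul' a b := by ext k; exact map_mul _ a b
  map_zero' := by ext k; exact map_zero _
  map_add' a b := by ext k; exact map_add _ a b

/-- The ideal of power series with zero constant term, as a `ℤ`-submodule of `P_X`. -/
def augIdeal : Submodule ℤ (PSeries X) where
  carrier := {f | (f : Π k, QRing X k) 0 = 0}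
  zero_mem' := rfl
  add_mem' := fun {a b} ha hb => by
    show ((a : Π k, QRing X k) + b) 0 = 0
    simp only [Pi.add_apply]
    rw [ha, hb, add_zero]
  smul_mem' := fun c a ha => by
    show (c • (a : Π k, QRing X k)) 0 = 0
    simp only [Pi.smul_apply]
    rw [ha, smul_zero]

end


section Magnus

variable {V : Type*} (X : SimpleGraph V)

lemma mk'_eq_zero_of_mem {k : ℕ} {x : RaamRing X} (hx : x ∈ genIdeal X ^ (k + 1)) :
    RingCon.mk' (qcon X k) x = 0 := by
  have : RingCon.mk' (qcon X k) x = RingCon.mk' (qcon X k) 0 :=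
    (RingCon.eq _).2 (RingConGen.Rel.of _ _ (by simpa using hx))
  simpa using this

lemma vgen_mem : ∀ v : V, vgen X v ∈ genIdeal X := fun v =>
  Submodule.subset_span ⟨1, 1, v, by simp⟩

lemma neg_vgen_pow_mem (v : V) (k : ℕ) : (-(vgen X v)) ^ (k + 1) ∈ genIdeal X ^ (k + 1) := by
  have h : vgen X v ∈ genIdeal X := vgen_mem X v
  have := Submodule.pow_mem_pow (genIdeal X) h (k+1)
  rcases Nat.even_or_odd (k+1) with he | ho
  · rw [he.neg_pow]; exact this
  · rw [ho.neg_pow]; exact (genIdeal X ^ (k+1)).neg_mem this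

/-- The inverse of `1 + s` in `P_X`, as a geometric series. -/
noncomputable def magnusInv (v : V) : PSeries X :=
  ⟨fun k => RingCon.mk' (qcon X k) (∑ i ∈ Finset.range (k + 1), (-(vgen X v)) ^ i), by
    intro k
    rw [qtrans_mk]
    have : RingCon.mk' (qcon X k) (∑ i ∈ Finset.range (k + 2), (-(vgen X v)) ^ i)
        = RingCon.mk' (qcon X k) (∑ i ∈ Finset.range (k + 1), (-(vgen X v)) ^ i) := by
      refine (RingCon.eq _).2 (RingConGen.Rel.of _ _ ?_)
      have : (∑ i ∈ Finset.range (k + 2), (-(vgen X v)) ^ i)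
          - (∑ i ∈ Finset.range (k + 1), (-(vgen X v)) ^ i) = (-(vgen X v)) ^ (k + 1) := by
        rw [Finset.sum_range_succ (n := k + 1), add_sub_cancel_left]
      rw [this]
      exact neg_vgen_pow_mem X v k
    exact this⟩

lemma magnusInv_spec₁ (v : V) :
    (1 + toPSeries X (vgen X v)) * magnusInv X v = 1 := by
  ext k
  show RingCon.mk' (qcon X k) ((1 + vgen X v) * ∑ i ∈ Finset.range (k + 1), (-(vgen X v)) ^ i)
      = RingCon.mk' (qcon X k) 1
  have key : (1 + vgen X v) * (∑ i ∈ Finset.range (k + 1), (-(vgen X v)) ^ i)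
      = 1 - (-(vgen X v)) ^ (k + 1) := by
    have := mul_geom_sum (-(vgen X v)) (k + 1)
    have h2 : (1 + vgen X v : RaamRing X) = -((-(vgen X v)) - 1) := by
      rw [neg_sub, sub_neg_eq_add]
    rw [h2, neg_mul, this, neg_sub]
  rw [key, map_sub, mk'_eq_zero_of_mem X (neg_vgen_pow_mem X v k), sub_zero]

lemma magnusInv_spec₂ (v : V) :
    magnusInv X v * (1 + toPSeries X (vgen X v)) = 1 := by
  ext k
  show RingCon.mk' (qcon X k) ((∑ i ∈ Finset.range (k + 1), (-(vgen X v)) ^ i) * (1 + vgen X v))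
      = RingCon.mk' (qcon X k) 1
  have key : (∑ i ∈ Finset.range (k + 1), (-(vgen X v)) ^ i) * (1 + vgen X v)
      = 1 - (-(vgen X v)) ^ (k + 1) := by
    have := geom_sum_mul (-(vgen X v)) (k + 1)
    have h2 : (1 + vgen X v : RaamRing X) = -((-(vgen X v)) - 1) := by
      rw [neg_sub, sub_neg_eq_add]
    rw [h2, mul_neg, this, neg_sub]
  rw [key, map_sub, mk'_eq_zero_of_mem X (neg_vgen_pow_mem X v k), sub_zero]

/-- The Magnus unit `1 + s`. -/
noncomputable def magnusUnit (v : V) : (PSeries X)ˣ :=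
  ⟨1 + toPSeries X (vgen X v), magnusInv X v, magnusInv_spec₁ X v, magnusInv_spec₂ X v⟩

lemma vgen_comm {x y : V} (h : X.Adj x y) :
    vgen X x * vgen X y = vgen X y * vgen X x := by
  unfold vgen
  rw [← map_mul, ← map_mul]
  congr 1
  show (raamCon X).mk' (FreeMonoid.of x * FreeMonoid.of y)
      = (raamCon X).mk' (FreeMonoid.of y * FreeMonoid.of x)
  exact (Con.eq _).2 (ConGen.Rel.of _ _ ⟨x, y, h, rfl, rfl⟩)

lemma magnusUnit_comm {x y : V} (h : X.Adj x y) :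
    magnusUnit X x * magnusUnit X y = magnusUnit X y * magnusUnit X x := by
  refine Units.ext ?_
  show (1 + toPSeries X (vgen X x)) * (1 + toPSeries X (vgen X y))
      = (1 + toPSeries X (vgen X y)) * (1 + toPSeries X (vgen X x))
  have hc : toPSeries X (vgen X x) * toPSeries X (vgen X y)
      = toPSeries X (vgen X y) * toPSeries X (vgen X x) := by
    rw [← map_mul, ← map_mul, vgen_comm X h]
  set a := toPSeries X (vgen X x)
  set b := toPSeries X (vgen X y)
  calc (1 + a) * (1 + b) = 1 + a + b + a * b := by noncomm_ring
    _ = 1 + a + b + b * a := by rw [hc]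
    _ = (1 + b) * (1 + a) := by noncomm_ring

lemma magnus_rels (r : FreeGroup V) (hr : r ∈ raagRels X) :
    FreeGroup.lift (magnusUnit X) r = 1 := by
  obtain ⟨x, y, hxy, rfl⟩ := hr
  simp only [map_mul, map_inv, FreeGroup.lift_apply_of]
  rw [magnusUnit_comm X hxy]
  group

end Magnus

theorem magnus_representation_exists {V : Type*} [Fintype V] (X : SimpleGraph V) :
    ∃! μ : RAAG X →* (PSeries X)ˣ,
      ∀ v : V, (μ (RAAG.of X v) : PSeries X) = 1 + toPSeries X (vgen X v) := by
  refine ⟨PresentedGroup.toGroup (magnus_rels X), fun v => ?_, fun g hg => ?_⟩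
  · show ((PresentedGroup.toGroup (magnus_rels X) (PresentedGroup.of v) : (PSeries X)ˣ) : PSeries X) = _
    rw [PresentedGroup.toGroup.of]
    rfl
  · refine MonoidHom.ext fun x => ?_
    exact PresentedGroup.toGroup.unique (magnus_rels X) g
      (fun v => Units.ext (hg v))
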